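/- (Discrete Gronwall–Bellman–Ou-Iang type bound) Let (xⱼ)ⱼ≥₀ be nonnegative reals and C > 0, pⱼ ≥ 0 with xⱼ ≤ C + ∑_{i<j} pᵢ(xᵢ + xᵢ²) for all j. If ∑_{i<j} pᵢ ≤ ln((C+1)/(C+1/2)) for all j, then xⱼ ≤ 2C for all j. -/

import Mathlib

theorem discrete_gronwall_bellman_ou_iang
    (x p : ℕ → ℝ) (C : ℝ) (hC : 0 < C)
    (hx : ∀ j, 0 ≤ x j) (hp : ∀ i, 0 ≤ p i)
    (hrec : ∀ j, x j ≤ C + ∑ i ∈ Finset.range j, p i * (x i + x i ^ 2))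
    (hsum : ∀ j, (∑ i ∈ Finset.range j, p i) ≤ Real.log ((C + 1) / (C + 1 / 2))) :
    ∀ j, x j ≤ 2 * C := by
  have hrpos : (0:ℝ) < (C + 1) / (C + 1 / 2) := by positivity
  set S : ℕ → ℝ := fun j => C + ∑ i ∈ Finset.range j, p i * (x i + x i ^ 2) with hSdef
  have hSpos : ∀ j, 0 < S j := by
    intro j
    have h : 0 ≤ ∑ i ∈ Finset.range j, p i * (x i + x i ^ 2) := by
      apply Finset.sum_nonneg
      intro i _
      have := hx i
      have := hp i
      nlinarith
    simp only [hSdef]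
    linarith
  have key : ∀ j, S j / (S j + 1) ≤ C / (C + 1) * Real.exp (∑ i ∈ Finset.range j, p i) := by
    intro j
    induction j with
    | zero => simp [hSdef]
    | succ n ih =>
      have hSn := hSpos n
      have hSn1 := hSpos (n + 1)
      have hxn : x n ≤ S n := hrec n
      have hT : S (n + 1) ≤ S n + p n * (S n + S n ^ 2) := by
        have h2 : x n + x n ^ 2 ≤ S n + S n ^ 2 := by nlinarith [hx n]
        have : S (n + 1) = S n + p n * (x n + x n ^ 2) := by
          simp [hSdef, Finset.sum_range_succ]; ring
        rw [this]
        nlinarith [hp n]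
      set T : ℝ := S n + p n * (S n + S n ^ 2) with hTdef
      have hTpos : 0 < T := by nlinarith [hp n]
      have step1 : S (n + 1) / (S (n + 1) + 1) ≤ T / (T + 1) := by
        rw [div_le_div_iff₀ (by linarith) (by linarith)]
        nlinarith
      have step2 : T / (T + 1) ≤ S n * (1 + p n) / (S n + 1) := by
        rw [div_le_div_iff₀ (by linarith) (by linarith), hTdef]
        nlinarith [hp n, mul_nonneg (mul_nonneg (hp n) (hp n)) hSn.le]
      have step2' : S n * (1 + p n) / (S n + 1) = S n / (S n + 1) * (1 + p n) := by
        ring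
      have step3 : S n / (S n + 1) * (1 + p n) ≤ S n / (S n + 1) * Real.exp (p n) := by
        have h1 : (1 : ℝ) + p n ≤ Real.exp (p n) := by
          have := Real.add_one_le_exp (p n); linarith
        have h2 : 0 ≤ S n / (S n + 1) := by positivity
        exact mul_le_mul_of_nonneg_left h1 h2
      have step4 : S n / (S n + 1) * Real.exp (p n) ≤
          C / (C + 1) * Real.exp (∑ i ∈ Finset.range n, p i) * Real.exp (p n) :=
        mul_le_mul_of_nonneg_right ih (Real.exp_nonneg _)
      calc S (n + 1) / (S (n + 1) + 1) ≤ T / (T + 1) := step1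
        _ ≤ S n * (1 + p n) / (S n + 1) := step2
        _ = S n / (S n + 1) * (1 + p n) := step2'
        _ ≤ S n / (S n + 1) * Real.exp (p n) := step3
        _ ≤ C / (C + 1) * Real.exp (∑ i ∈ Finset.range n, p i) * Real.exp (p n) := step4
        _ = C / (C + 1) * Real.exp (∑ i ∈ Finset.range (n + 1), p i) := by
            rw [Finset.sum_range_succ, Real.exp_add]; ring
  intro j
  have hSj := hSpos j
  have hexp : Real.exp (∑ i ∈ Finset.range j, p i) ≤ (C + 1) / (C + 1 / 2) := by
    calc Real.exp (∑ i ∈ Finset.range j, p i)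
        ≤ Real.exp (Real.log ((C + 1) / (C + 1 / 2))) := Real.exp_le_exp.mpr (hsum j)
      _ = (C + 1) / (C + 1 / 2) := Real.exp_log hrpos
  have h1 : S j / (S j + 1) ≤ C / (C + 1 / 2) := by
    have h2 : C / (C + 1) * Real.exp (∑ i ∈ Finset.range j, p i)
        ≤ C / (C + 1) * ((C + 1) / (C + 1 / 2)) :=
      mul_le_mul_of_nonneg_left hexp (by positivity)
    have h3 : C / (C + 1) * ((C + 1) / (C + 1 / 2)) = C / (C + 1 / 2) := by
      field_simp
    linarith [key j]
  have habs : ∀ s : ℝ, s * (C + 1 / 2) ≤ C * (s + 1) → s ≤ 2 * C := by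
    intro s hs
    nlinarith
  have h4 : S j ≤ 2 * C := by
    rw [div_le_div_iff₀ (by linarith) (by linarith)] at h1
    exact habs (S j) h1
  have hxj : x j ≤ S j := hrec j
  linarith
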